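/- arXiv:2604.20778 — 2 statements merged into one kernel-verified Lean document; each statement's English description precedes it below -/
import Mathlib

section
/- Let ⟨X_a : a ∈ A⟩ be a family of subsets of the ground set of a matroid M with ⋃_{a ∈ A} X_a = E(M). Then the collection of all flats F of M such that the family ⟨X_a − F : a ∈ A⟩ is skew in the contraction M / F is a modular cut of M. -/
open Set

namespace Matroid

variable {α : Type*} {ι : Type*}

/-- The deletion of a set `D` of elements from `M`. -/
def delete' (M : Matroid α) (D : Set α) : Matroid α := M ↾ (M.E \ D)

/-- The contraction of a set `C` of elements from `M`, defined as the dual of the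
deletion of `C` from the dual. -/
def contract' (M : Matroid α) (C : Set α) : Matroid α := (M✶.delete' C)✶

/-- A circuit of `M` is a minimal dependent subset of the ground set. -/
def Circuit (M : Matroid α) (C : Set α) : Prop :=
  C ⊆ M.E ∧ ¬ M.Indep C ∧ ∀ I, I ⊂ C → M.Indep I

/-- The rank of a set `X` in `M`, valued in `ℕ∞`. It is the supremum of the `encard`s of
the independent subsets of `X`; equivalently, the `encard` of any basis of `X`. -/
noncomputable def eRk' (M : Matroid α) (X : Set α) : ℕ∞ :=
  ⨆ I : {I : Set α // M.Indep I ∧ I ⊆ X}, I.1.encard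

/-- The rank of the matroid `M`, valued in `ℕ∞`. -/
noncomputable def eRank' (M : Matroid α) : ℕ∞ := M.eRk' M.E

/-- The nullity of a set `X` in `M`, valued in `ℕ∞` : the corank of the restriction
of `M` to `X`. -/
noncomputable def nullity (M : Matroid α) (X : Set α) : ℕ∞ := (M ↾ X)✶.eRank'

/-- The relative rank of `Y` with respect to `X` : the rank of `Y \ X` in `M / X`. -/
noncomputable def eRelRk (M : Matroid α) (X Y : Set α) : ℕ∞ := (M.contract' X).eRk' (Y \ X)

/-- `B` is a mutual basis in `M` for the indexed set family `X` if `B` is independent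
and `X i ∩ B` is a basis of `X i` in `M` for each index `i`. -/
def IsMutualBasis (M : Matroid α) (B : Set α) (X : ι → Set α) : Prop :=
  M.Indep B ∧ ∀ i, M.IsBasis (X i ∩ B) (X i)

/-- An indexed set family is modular in `M` if it has a mutual basis. -/
def IsModularFamily (M : Matroid α) (X : ι → Set α) : Prop := ∃ B, M.IsMutualBasis B X

/-- `B` is a mutual basis in `M` for the collection `𝓧` of sets if `B` is independent
and `X ∩ B` is a basis of `X` in `M` for each `X ∈ 𝓧`. -/
def IsMutualBasisSet (M : Matroid α) (B : Set α) (𝓧 : Set (Set α)) : Prop :=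
  M.Indep B ∧ ∀ X ∈ 𝓧, M.IsBasis (X ∩ B) X

/-- A collection of sets is modular in `M` if it has a mutual basis. -/
def IsModularSetFamily (M : Matroid α) (𝓧 : Set (Set α)) : Prop :=
  ∃ B, M.IsMutualBasisSet B 𝓧

/-- `(X, Y)` is a modular pair in `M` if `{X, Y}` has a mutual basis. -/
def IsModularPair (M : Matroid α) (X Y : Set α) : Prop := M.IsModularSetFamily {X, Y}

/-- A flat `F` of `M` is modular if it forms a modular pair with every flat of `M`. -/
def IsModularFlat (M : Matroid α) (F : Set α) : Prop :=
  M.IsFlat F ∧ ∀ G, M.IsFlat G → M.IsModularPair F G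

/-- A matroid is modular if every flat is modular. -/
def Modular (M : Matroid α) : Prop := ∀ F, M.IsFlat F → M.IsModularFlat F

/-- An indexed family of sets is skew in `M` if it is modular in `M`, and the
intersection of any two distinct members consists of loops. -/
def IsSkewFamily (M : Matroid α) (X : ι → Set α) : Prop :=
  M.IsModularFamily X ∧ ∀ ⦃i j⦄, i ≠ j → X i ∩ X j ⊆ M.closure ∅

/-- A modular cut of `M` : a collection of flats that is up-closed, closed under
intersections of modular pairs, and closed under intersections of infinite
modular chains. -/
def IsModularCut (M : Matroid α) (𝓕 : Set (Set α)) : Prop :=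
  (∀ F ∈ 𝓕, M.IsFlat F) ∧
  (∀ F F', F ∈ 𝓕 → M.IsFlat F' → F ⊆ F' → F' ∈ 𝓕) ∧
  (∀ F F', F ∈ 𝓕 → F' ∈ 𝓕 → M.IsModularPair F F' → F ∩ F' ∈ 𝓕) ∧
  (∀ 𝓒 ⊆ 𝓕, 𝓒.Infinite → IsChain (· ⊆ ·) 𝓒 → M.IsModularSetFamily 𝓒 → ⋂₀ 𝓒 ∈ 𝓕)

/-- `N` is a quotient of `M` if they have the same ground set, and every set's closure
in `M` is contained in its closure in `N`. -/
def IsQuotient (N M : Matroid α) : Prop := N.E = M.E ∧ ∀ X, M.closure X ⊆ N.closure X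

/-- A hyperplane of `M` is a maximal proper flat of `M`. -/
def Hyperplane (M : Matroid α) (H : Set α) : Prop :=
  M.IsFlat H ∧ H ≠ M.E ∧ ∀ F, M.IsFlat F → H ⊂ F → F = M.E

/-- The discrepancy of the pair `(N, M)` : the minimum of `(B \ B₀).encard` over all
`(N,M)`-basis pairs, i.e. pairs `(B₀, B)` where `B₀` is a base of `N`, `B` is a base
of `M` and `B₀ ⊆ B`. -/
noncomputable def discrepancy (N M : Matroid α) : ℕ∞ :=
  ⨅ p : {p : Set α × Set α // N.IsBase p.1 ∧ M.IsBase p.2 ∧ p.1 ⊆ p.2},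
    (p.1.2 \ p.1.1).encard

section Guts

variable {M : Matroid α} {B C I J K S X Y F G : Set α} {x : α}

lemma indep_trace (hB : M.Indep B) (hJB : J ⊆ B) : B ∩ M.closure J = J := by
  refine subset_antisymm (fun x hx => ?_) (subset_inter hJB
    (M.subset_closure J ((hJB.trans hB.subset_ground))))
  exact (((hB.subset hJB).mem_closure_iff').1 hx.2).2 (hB.subset (insert_subset hx.1 hJB))

lemma indep_not_mem_closure_diff (hI : M.Indep I) (hxI : x ∈ I)
    (hx : x ∈ M.closure (I \ {x})) : False := by
  have h := ((hI.subset diff_subset).mem_closure_iff').1 hx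
  simp only [insert_diff_singleton, insert_eq_self.2 hxI] at h
  exact (h.2 hI).2 rfl

@[simp] lemma guts_contract_ground (M : Matroid α) (C : Set α) :
    (M.contract' C).E = M.E \ C := rfl

lemma contract_base_of (hC : C ⊆ M.E) (hJ : M.IsBasis J C) (hd : Disjoint B C)
    (hB : M.IsBase (B ∪ J)) : (M.contract' C).IsBase B := by
  have hBE : B ⊆ M.E := subset_union_left.trans hB.subset_ground
  have hBJC : (B ∪ J) ∩ C = J := by
    refine subset_antisymm (fun x hx => ?_) (subset_inter subset_union_right hJ.subset)
    rcases hx.1 with h | h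
    · exact (disjoint_left.1 hd h hx.2).elim
    · exact h
  have hbas : M✶.IsBasis ((M.E \ (B ∪ J)) ∩ (M.E \ C)) (M.E \ C) :=
    hB.compl_inter_isBasis_of_inter_isBasis (by rwa [hBJC])
  have hid : (M.E \ (B ∪ J)) ∩ (M.E \ C) = (M.E \ C) \ B := by
    ext x
    simp only [mem_diff, mem_inter_iff, mem_union]
    constructor
    · rintro ⟨⟨hE, hBJ⟩, _, hc⟩; exact ⟨⟨hE, hc⟩, fun h => hBJ (Or.inl h)⟩
    · rintro ⟨⟨hE, hc⟩, hb⟩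
      exact ⟨⟨hE, fun h => h.elim hb (fun hj => hc (hJ.subset hj))⟩, hE, hc⟩
  rw [hid] at hbas
  rw [contract', dual_isBase_iff']
  constructor
  · rwa [delete', isBase_restrict_iff (show M✶.E \ C ⊆ M✶.E from diff_subset),
      restrict_ground_eq, dual_ground]
  · rw [delete', restrict_ground_eq, dual_ground]
    exact subset_diff.2 ⟨hBE, hd⟩

lemma contract_base_exists (hC : C ⊆ M.E) (h : (M.contract' C).IsBase B) :
    Disjoint B C ∧ ∃ K, M.IsBasis K C ∧ M.IsBase (B ∪ K) := by
  rw [contract', dual_isBase_iff'] at h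
  obtain ⟨h1, h2⟩ := h
  rw [delete', restrict_ground_eq, dual_ground] at h1 h2
  rw [isBase_restrict_iff (show (M.E \ C : Set α) ⊆ M✶.E by
    rw [dual_ground]; exact diff_subset)] at h1
  obtain ⟨Bs, hBs, hEq⟩ := h1.exists_isBase
  have hMb : M.IsBase (M.E \ Bs) := hBs.compl_isBase_of_dual
  have hDB : M✶.IsBasis (Bs ∩ (M.E \ C)) (M.E \ C) := by rwa [← hEq]
  have hKb : M.IsBasis (C \ Bs) C := by
    have hiff := hBs.inter_isBasis_iff_compl_inter_isBasis_dual
      (X := M.E \ C) (by rw [dual_ground]; exact diff_subset)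
    rw [dual_dual, dual_ground, diff_diff_cancel_left hC] at hiff
    have := hiff.1 hDB
    rwa [show (M.E \ Bs) ∩ C = C \ Bs by
      ext x; simp only [mem_inter_iff, mem_diff]; exact ⟨fun h => ⟨h.2, h.1.2⟩,
        fun h => ⟨⟨hC h.1, h.2⟩, h.1⟩⟩] at this
  have hid : M.E \ Bs = B ∪ (C \ Bs) := by
    ext x
    constructor
    · rintro ⟨hE, hBs'⟩
      by_cases hc : x ∈ C
      · exact Or.inr ⟨hc, hBs'⟩
      · left
        by_contra hb
        have : x ∈ (M.E \ C) \ B := ⟨⟨hE, hc⟩, hb⟩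
        rw [hEq] at this
        exact hBs' this.1
    · rintro (hb | hc)
      · have hxEC : x ∈ M.E \ C := h2 hb
        refine ⟨hxEC.1, fun hbs => ?_⟩
        have : x ∈ (M.E \ C) \ B := by rw [hEq]; exact ⟨hbs, hxEC⟩
        exact this.2 hb
      · exact ⟨hC hc.1, hc.2⟩
  rw [hid] at hMb
  exact ⟨(subset_diff.1 h2).2, ⟨C \ Bs, hKb, hMb⟩⟩

lemma base_union_basis_exchange (hB : M.IsBase (B ∪ K)) (hd : Disjoint B C)
    (hK : M.IsBasis K C) (hJ : M.IsBasis J C) : M.IsBase (B ∪ J) := by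
  obtain ⟨Bh, hBh, hJBh, hBhss⟩ := hJ.indep.exists_isBase_subset_union_isBase hB
  have hBhC : Bh ∩ C = J := by
    refine subset_antisymm ?_ (subset_inter hJBh hJ.subset)
    intro x hx
    have : x ∈ Bh ∩ M.closure J := ⟨hx.1, hJ.subset_closure hx.2⟩
    rwa [indep_trace hBh.indep hJBh] at this
  have hBheq : Bh = (B ∩ Bh) ∪ J := by
    refine subset_antisymm (fun x hx => ?_) (union_subset (inter_subset_right) hJBh)
    rcases hBhss hx with hj | hbk
    · exact Or.inr hj
    rcases hbk with hb | hk
    · exact Or.inl ⟨hb, hx⟩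
    · have hxc : x ∈ Bh ∩ C := ⟨hx, hK.subset hk⟩
      rw [hBhC] at hxc
      exact Or.inr hxc
  have hBBh : B ⊆ Bh := by
    intro x hxB
    by_contra hxBh
    have hxE : x ∈ M.E := hB.subset_ground (Or.inl hxB)
    have hxcl : x ∈ M.closure ((B ∩ Bh) ∪ K) := by
      have h1 : x ∈ M.closure Bh := by rw [hBh.closure_eq]; exact hxE
      rw [hBheq] at h1
      have h2 : M.closure ((B ∩ Bh) ∪ J) ⊆ M.closure ((B ∩ Bh) ∪ M.closure K) :=
        M.closure_subset_closure (union_subset_union_right _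
          (hJ.subset.trans (hK.subset_closure)))
      rw [closure_union_closure_right_eq] at h2
      exact h2 h1
    have hsub : (B ∩ Bh) ∪ K ⊆ (B ∪ K) \ {x} := by
      rintro y (hy | hy)
      · exact ⟨Or.inl hy.1, fun h => hxBh (h ▸ hy.2)⟩
      · refine ⟨Or.inr hy, fun h => ?_⟩
        rw [mem_singleton_iff] at h
        subst h
        exact disjoint_left.1 hd hxB (hK.subset hy)
    exact indep_not_mem_closure_diff hB.indep (Or.inl hxB)
      ((M.closure_subset_closure hsub) hxcl)
  have : B ∪ J = Bh := subset_antisymm (union_subset hBBh hJBh)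
    (hBheq.trans_subset (union_subset_union_left _ inter_subset_left))
  rwa [this]

lemma contract_indep_of (hC : C ⊆ M.E) (hJ : M.IsBasis J C) (hd : Disjoint I C)
    (hIJ : M.Indep (I ∪ J)) : (M.contract' C).Indep I := by
  obtain ⟨Bh, hBh, hss⟩ := hIJ.exists_isBase_superset
  have hBhC : Bh ∩ C = J := by
    refine subset_antisymm ?_ (subset_inter ((subset_union_right).trans hss) hJ.subset)
    intro x hx
    have : x ∈ Bh ∩ M.closure J := ⟨hx.1, hJ.subset_closure hx.2⟩
    rwa [indep_trace hBh.indep ((subset_union_right).trans hss)] at this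
  have hbase : (M.contract' C).IsBase (Bh \ C) := by
    refine contract_base_of hC hJ disjoint_sdiff_left ?_
    rwa [← hBhC, diff_union_inter]
  exact hbase.indep.subset (subset_diff.2 ⟨(subset_union_left).trans hss, hd⟩)

lemma contract_indep_elim (hC : C ⊆ M.E) (hJ : M.IsBasis J C)
    (h : (M.contract' C).Indep I) : Disjoint I C ∧ M.Indep (I ∪ J) := by
  obtain ⟨B', hB', hIB'⟩ := h.exists_isBase_superset
  obtain ⟨hd, K, hK, hBK⟩ := contract_base_exists hC hB'
  have hBJ : M.IsBase (B' ∪ J) := base_union_basis_exchange hBK hd hK hJ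
  exact ⟨hd.mono_left hIB', hBJ.indep.subset (union_subset_union_left _ hIB')⟩

lemma guts_contract_closure_eq (hC : C ⊆ M.E) (hJ : M.IsBasis J C) (hS : S ⊆ M.E \ C) :
    (M.contract' C).closure S = M.closure (S ∪ C) \ C := by
  set N := M.contract' C with hN
  have hSE : S ⊆ N.E := by rwa [hN, guts_contract_ground]
  obtain ⟨I, hI⟩ := N.exists_isBasis S hSE
  have hIdisj : Disjoint I C ∧ M.Indep (I ∪ J) := contract_indep_elim hC hJ hI.indep
  -- pointwise bridge : N.closure I = M.closure (I ∪ J) \ C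
  have hbridge : N.closure I = M.closure (I ∪ J) \ C := by
    ext x
    by_cases hxI : x ∈ I
    · simp only [mem_diff]
      exact ⟨fun _ => ⟨M.subset_closure (I ∪ J) (hIdisj.2.subset_ground) (Or.inl hxI),
          fun hxC => disjoint_left.1 hIdisj.1 hxI hxC⟩,
        fun _ => N.subset_closure I (hI.indep.subset_ground) hxI⟩
    constructor
    · intro hx
      have h1 := (hI.indep.mem_closure_iff').1 hx
      have hxE : x ∈ M.E \ C := by rw [← guts_contract_ground (M := M) (C := C)]; exact h1.1
      refine ⟨(hIdisj.2.mem_closure_iff').2 ⟨hxE.1, fun hins => ?_⟩, hxE.2⟩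
      rw [← insert_union] at hins
      have : (M.contract' C).Indep (insert x I) := contract_indep_of hC hJ
        (disjoint_left.2 (by
          rintro y hy hyC
          rcases mem_insert_iff.1 hy with rfl | hyI
          · exact hxE.2 hyC
          · exact disjoint_left.1 hIdisj.1 hyI hyC)) hins
      exact absurd (h1.2 this) hxI
    · rintro ⟨hx, hxC⟩
      have h1 := (hIdisj.2.mem_closure_iff').1 hx
      have hxE : x ∈ N.E := by rw [hN, guts_contract_ground]; exact ⟨h1.1, hxC⟩
      refine (hI.indep.mem_closure_iff').2 ⟨hxE, fun hins => ?_⟩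
      have hMins := (contract_indep_elim hC hJ hins).2
      rw [insert_union] at hMins
      rcases h1.2 hMins with h | h
      · exact h
      · exact absurd (hJ.subset h) hxC
  have hclSC : M.closure (S ∪ C) = M.closure (I ∪ J) := by
    refine subset_antisymm ?_ (M.closure_subset_closure
      (union_subset_union hI.subset hJ.subset))
    refine M.closure_subset_closure_of_subset_closure (union_subset ?_ ?_)
    · intro y hy
      have := hI.subset_closure hy
      rw [hbridge] at this
      exact this.1
    · exact (hJ.subset_closure).trans (M.closure_subset_closure subset_union_right)
  rw [← hI.closure_eq_closure, hbridge, hclSC]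

lemma contract_loops (hF : M.IsFlat F) (hJ : M.IsBasis J F) :
    (M.contract' F).closure ∅ = ∅ := by
  rw [guts_contract_closure_eq hF.subset_ground hJ (empty_subset _), empty_union, hF.closure,
    diff_self]

/-- Union of independent subsets of two skew sets is independent. -/
lemma union_indep_of_skew_pair {N : Matroid α} {C X Y I J : Set α} (hC : N.Indep C)
    (hX : N.IsBasis (C ∩ X) X) (hY : N.IsBasis (C ∩ Y) Y) (hXY : X ∩ Y ⊆ N.closure ∅)
    (hI : N.Indep I) (hIX : I ⊆ X) (hJ : N.Indep J) (hJY : J ⊆ Y) : N.Indep (I ∪ J) := by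
  have hXE : X ⊆ N.E := hX.subset_ground
  have hYE : Y ⊆ N.E := hY.subset_ground
  have htr0 : C ∩ N.closure ∅ = ∅ := by
    have := indep_trace hC (empty_subset C)
    rwa [inter_comm] at this ⊢
  -- no loops in independent sets
  have hnoloop : ∀ ⦃D : Set α⦄, N.Indep D → D ∩ N.closure ∅ = ∅ := by
    intro D hD
    have := indep_trace hD (empty_subset D)
    rwa [inter_comm] at this ⊢
  obtain ⟨I', hI', hII'⟩ := hI.subset_isBasis_of_subset hIX hXE
  have hXb : N.IsBasis (C ∩ X) X := hX
  have hCXind : (N.contract' X).Indep (C \ X) := by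
    refine contract_indep_of hXE hXb (by rw [inter_comm] at hXb; exact disjoint_sdiff_left) ?_
    rw [diff_union_inter]
    exact hC
  have hC' : N.Indep ((C \ X) ∪ I') := (contract_indep_elim hXE hI' hCXind).2
  have hC'Y : ((C \ X) ∪ I') ∩ Y = C ∩ Y := by
    ext x
    constructor
    · rintro ⟨hx | hx, hxY⟩
      · exact ⟨hx.1, hxY⟩
      · exact absurd (show x ∈ I' ∩ N.closure ∅ from ⟨hx, hXY ⟨hI'.subset hx, hxY⟩⟩)
          (by rw [hnoloop hI'.indep]; simp)
    · rintro ⟨hxC, hxY⟩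
      refine ⟨Or.inl ⟨hxC, fun hxX => ?_⟩, hxY⟩
      exact absurd (show x ∈ C ∩ N.closure ∅ from ⟨hxC, hXY ⟨hxX, hxY⟩⟩)
        (by rw [htr0]; simp)
  have hC'Ybas : N.IsBasis (((C \ X) ∪ I') ∩ Y) Y := by rw [hC'Y]; exact hY
  have hC'Yind : (N.contract' Y).Indep (((C \ X) ∪ I') \ Y) := by
    refine contract_indep_of hYE hC'Ybas disjoint_sdiff_left ?_
    rw [diff_union_inter]
    exact hC'
  obtain ⟨J', hJ', hJJ'⟩ := hJ.subset_isBasis_of_subset hJY hYE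
  have hfinal : N.Indep ((((C \ X) ∪ I') \ Y) ∪ J') :=
    (contract_indep_elim hYE hJ' hC'Yind).2
  refine hfinal.subset ?_
  rintro x (hx | hx)
  · refine Or.inl ⟨Or.inr (hII' hx), fun hxY => ?_⟩
    exact absurd (show x ∈ I ∩ N.closure ∅ from ⟨hx, hXY ⟨hIX hx, hxY⟩⟩)
      (by rw [hnoloop hI]; simp)
  · exact Or.inr (hJJ' hx)

/-- Localization of closure across a skew pair. -/
lemma mem_closure_localize {N : Matroid α} {C X Y S T : Set α} {x : α} (hC : N.Indep C)
    (hX : N.IsBasis (C ∩ X) X) (hY : N.IsBasis (C ∩ Y) Y) (hXY : X ∩ Y ⊆ N.closure ∅)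
    (hS : N.Indep S) (hSX : S ⊆ X) (hT : T ⊆ Y)
    (hx : x ∈ N.closure (S ∪ T)) (hxX : x ∈ X) : x ∈ N.closure S := by
  obtain ⟨IT, hIT⟩ := N.exists_isBasis T (hT.trans hY.subset_ground)
  have hclST : N.closure (S ∪ T) = N.closure (S ∪ IT) := by
    rw [← closure_union_closure_right_eq, ← hIT.closure_eq_closure,
      closure_union_closure_right_eq]
  by_contra hxS
  have hxE : x ∈ N.E := N.mem_ground_of_mem_closure hx
  have hxnS : x ∉ S := fun h => hxS (N.mem_closure_of_mem h hS.subset_ground)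
  have hins : N.Indep (insert x S) :=
    (hS.insert_indep_iff_of_notMem hxnS).2 ⟨hxE, hxS⟩
  have hxnY : x ∉ Y := fun hxY =>
    hxS ((N.closure_subset_closure (empty_subset S)) (hXY ⟨hxX, hxY⟩))
  have hbig : N.Indep (insert x S ∪ IT) :=
    union_indep_of_skew_pair hC hX hY hXY hins (insert_subset hxX hSX)
      hIT.indep (hIT.subset.trans hT)
  rw [insert_union] at hbig
  have hxnSIT : x ∉ S ∪ IT := by
    rintro (h | h)
    · exact hxnS h
    · exact hxnY (hT (hIT.subset h))
  have hSIT : N.Indep (S ∪ IT) := hbig.subset (subset_insert _ _)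
  have := ((hSIT.insert_indep_iff_of_notMem hxnSIT).1 hbig).2
  rw [hclST] at hx
  exact this hx

/-- In a matroid with a skew family covering the ground set, any base localizes:
each member of the family is spanned by the base's trace on it. -/
lemma sector_span {N : Matroid α} {Y : ι → Set α} (hu : ⋃ i, Y i = N.E) {C Q : Set α}
    (hC : N.Indep C) (hCb : ∀ i, N.IsBasis (Y i ∩ C) (Y i))
    (hpw : ∀ ⦃i k⦄, i ≠ k → Y i ∩ Y k ⊆ N.closure ∅)
    (hQ : N.IsBase Q) (j : ι) : Y j ⊆ N.closure (Q ∩ Y j) := by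
  classical
  have hYE : ∀ i, Y i ⊆ N.E := fun i => (hCb i).subset_ground
  have hnoloop : ∀ ⦃D : Set α⦄, N.Indep D → D ∩ N.closure ∅ = ∅ := by
    intro D hD
    have := indep_trace hD (empty_subset D)
    rwa [inter_comm] at this ⊢
  set θ : ι → Set α := fun i => N.closure (Y i) with hθ
  have hθC : ∀ i, N.closure (Y i ∩ C) = θ i := fun i => (hCb i).closure_eq_closure
  have hθpair : ∀ i k, i ≠ k → θ i ∩ θ k = N.closure ∅ := by
    intro i k hik
    have hind : N.Indep ((Y i ∩ C) ∪ (Y k ∩ C)) :=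
      hC.subset (union_subset inter_subset_right inter_subset_right)
    have h0 : (Y i ∩ C) ∩ (Y k ∩ C) = ∅ := by
      refine eq_empty_iff_forall_notMem.2 (fun x hx => ?_)
      have hxl : x ∈ C ∩ N.closure ∅ := ⟨hx.1.2, hpw hik ⟨hx.1.1, hx.2.1⟩⟩
      rw [hnoloop hC] at hxl
      exact hxl
    have hie := hind.closure_inter_eq_inter_closure
    rw [h0, hθC, hθC] at hie
    exact hie.symm
  have haux : ∀ {D : Set α}, N.Indep D → ∀ {q}, q ∈ D → q ∈ θ j → q ∈ Y j := by
    intro D hD q hqD hqθ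
    have hqE : q ∈ N.E := hD.subset_ground hqD
    rw [← hu] at hqE
    obtain ⟨k, hk⟩ := mem_iUnion.1 hqE
    by_cases hkj : k = j
    · exact hkj ▸ hk
    · have hql : q ∈ θ j ∩ θ k := ⟨hqθ, N.subset_closure _ (hYE k) hk⟩
      rw [hθpair j k (fun h => hkj h.symm)] at hql
      have : q ∈ D ∩ N.closure ∅ := ⟨hqD, hql⟩
      rw [hnoloop hD] at this
      exact this.elim
  have hQθ : Q ∩ θ j = Q ∩ Y j :=
    subset_antisymm (fun x hx => ⟨hx.1, haux hQ.indep hx.1 hx.2⟩)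
      (inter_subset_inter_right Q (N.subset_closure _ (hYE j)))
  set U' : Set α := ⋃ k ∈ ({j}ᶜ : Set ι), Y k with hU'
  set D' : Set α := ⋃ k ∈ ({j}ᶜ : Set ι), (Y k ∩ C) with hD'
  have hD'C : D' ⊆ C := iUnion₂_subset fun k _ => inter_subset_right
  have hU'E : U' ⊆ N.E := iUnion₂_subset fun k _ => hYE k
  set θ' : Set α := N.closure U' with hθ'
  have hθ'D : N.closure D' = θ' := by
    refine subset_antisymm (N.closure_subset_closure
      (iUnion₂_mono fun k _ => inter_subset_left)) ?_
    refine N.closure_subset_closure_of_subset_closure (fun x hx => ?_)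
    obtain ⟨k, hkj, hk⟩ := mem_iUnion₂.1 hx
    exact (N.closure_subset_closure (subset_biUnion_of_mem hkj)) ((hCb k).subset_closure hk)
  have hD'θ' : D' ⊆ C ∩ θ' := subset_inter hD'C
    ((iUnion₂_mono fun k _ => inter_subset_left).trans (N.subset_closure _ hU'E))
  have hbasθ' : N.IsBasis (C ∩ θ') θ' := by
    refine (hC.subset inter_subset_left).isBasis_of_subset_of_subset_closure
      inter_subset_right ?_
    have h2 : N.closure D' ⊆ N.closure (C ∩ θ') := N.closure_subset_closure hD'θ'
    rwa [hθ'D] at h2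
  have hCθj : C ∩ θ j = Y j ∩ C :=
    subset_antisymm (fun x hx => ⟨haux hC hx.1 hx.2, hx.1⟩)
      (fun x hx => ⟨hx.2, N.subset_closure _ (hYE j) hx.1⟩)
  have hbasθj : N.IsBasis (C ∩ θ j) (θ j) := by
    rw [hCθj]
    exact (hCb j).isBasis_closure_right
  have hθθ' : θ j ∩ θ' ⊆ N.closure ∅ := by
    have hind : N.Indep ((C ∩ θ j) ∪ (C ∩ θ')) :=
      hC.subset (union_subset inter_subset_left inter_subset_left)
    have hie := hind.closure_inter_eq_inter_closure
    have hclj : N.closure (C ∩ θ j) = θ j := by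
      rw [hbasθj.closure_eq_closure, hθ, closure_closure]
    have hclθ' : N.closure (C ∩ θ') = θ' := by
      rw [hbasθ'.closure_eq_closure, hθ', closure_closure]
    have h0 : (C ∩ θ j) ∩ (C ∩ θ') = ∅ := by
      refine eq_empty_iff_forall_notMem.2 (fun x hx => ?_)
      have hxYj : x ∈ Y j := haux hC hx.1.1 hx.1.2
      have hxD' : x ∈ D' := by
        have : x ∈ C ∩ N.closure D' := ⟨hx.1.1, by rw [hθ'D]; exact hx.2.2⟩
        rwa [indep_trace hC hD'C] at this
      obtain ⟨k, hkj, hk⟩ := mem_iUnion₂.1 hxD'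
      have : x ∈ C ∩ N.closure ∅ :=
        ⟨hx.1.1, hpw (show j ≠ k from fun h => hkj h.symm) ⟨hxYj, hk.1⟩⟩
      rw [hnoloop hC] at this
      exact this
    rw [h0, hclj, hclθ'] at hie
    exact hie.symm.subset
  intro x hx
  have hxθ : x ∈ θ j := N.subset_closure _ (hYE j) hx
  have hxcl : x ∈ N.closure ((Q ∩ θ j) ∪ (Q \ θ j)) := by
    rw [inter_union_diff, hQ.closure_eq]
    exact (hYE j) hx
  have hT : Q \ θ j ⊆ θ' := by
    intro q hq
    have hqE : q ∈ N.E := hQ.indep.subset_ground hq.1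
    rw [← hu] at hqE
    obtain ⟨k, hk⟩ := mem_iUnion.1 hqE
    by_cases hkj : k = j
    · exact absurd (N.subset_closure _ (hYE j) (hkj ▸ hk)) hq.2
    · exact N.subset_closure _ hU'E (mem_biUnion hkj hk)
  have hloc := mem_closure_localize hC hbasθj hbasθ' hθθ'
    (hQ.indep.subset inter_subset_left) inter_subset_right hT hxcl hxθ
  rwa [hQθ] at hloc


lemma extract_witness {M : Matroid α} {X : ι → Set α} (hu : ⋃ i, X i = M.E)
    {F Bb : Set α} (hF : M.IsFlat F)
    (hskew : (M.contract' F).IsSkewFamily (fun i => X i \ F))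
    (hB : M.IsBase Bb) (htr : M.IsBasis (Bb ∩ F) F) :
    (∀ ⦃i j⦄, i ≠ j → X i ∩ X j ⊆ F) ∧
      ∀ j, X j ⊆ M.closure ((Bb ∩ F) ∪ ((Bb ∩ X j) \ F)) := by
  obtain ⟨⟨C, hCi, hCb⟩, hpwN⟩ := hskew
  have hFE := hF.subset_ground
  have hloops : (M.contract' F).closure ∅ = ∅ := contract_loops hF htr
  have hpair : ∀ ⦃i j⦄, i ≠ j → X i ∩ X j ⊆ F := by
    intro i j hij x hx
    by_contra hxF
    have hmem : x ∈ (X i \ F) ∩ (X j \ F) := ⟨⟨hx.1, hxF⟩, hx.2, hxF⟩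
    have := hpwN hij hmem
    rw [hloops] at this
    exact this
  refine ⟨hpair, fun j => ?_⟩
  have hcov : ⋃ i, (X i \ F) = (M.contract' F).E := by
    rw [guts_contract_ground, ← hu, iUnion_diff]
  have hQ : (M.contract' F).IsBase (Bb \ F) := contract_base_of hFE htr disjoint_sdiff_left
    (by rw [diff_union_inter]; exact hB)
  have hspan := sector_span hcov hCi hCb hpwN hQ j
  have hSeq : (Bb \ F) ∩ (X j \ F) = (Bb ∩ X j) \ F := by
    ext x; simp only [mem_diff, mem_inter_iff]; tauto
  rw [hSeq] at hspan
  have hSE : (Bb ∩ X j) \ F ⊆ M.E \ F := fun x hx => ⟨hB.subset_ground hx.1.1, hx.2⟩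
  rw [guts_contract_closure_eq hFE htr hSE] at hspan
  have hFeq : M.closure (Bb ∩ F) = F := by rw [htr.closure_eq_closure, hF.closure]
  intro x hxX
  by_cases hxF : x ∈ F
  · exact (M.closure_subset_closure subset_union_left)
      (by rw [hFeq]; exact hxF)
  · have hx2 : x ∈ M.closure (((Bb ∩ X j) \ F) ∪ F) := (hspan ⟨hxX, hxF⟩).1
    have he : M.closure (((Bb ∩ X j) \ F) ∪ (Bb ∩ F)) = M.closure (((Bb ∩ X j) \ F) ∪ F) := by
      rw [← closure_union_closure_right_eq, hFeq]
    rw [← he, union_comm] at hx2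
    exact hx2

lemma construct_witness {M : Matroid α} {X : ι → Set α} {G Bb : Set α} (hG : M.IsFlat G)
    (hB : M.IsBase Bb) (htr : M.IsBasis (Bb ∩ G) G)
    (hsp : ∀ j, X j ⊆ M.closure ((Bb ∩ G) ∪ ((Bb ∩ X j) \ G)))
    (hpw : ∀ ⦃i j⦄, i ≠ j → X i ∩ X j ⊆ G) :
    (M.contract' G).IsSkewFamily (fun i => X i \ G) := by
  have hGE := hG.subset_ground
  have hQ : (M.contract' G).IsBase (Bb \ G) := contract_base_of hGE htr disjoint_sdiff_left
    (by rw [diff_union_inter]; exact hB)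
  have hFeq : M.closure (Bb ∩ G) = G := by rw [htr.closure_eq_closure, hG.closure]
  constructor
  · refine ⟨Bb \ G, hQ.indep, fun i => ?_⟩
    have hSeq : (X i \ G) ∩ (Bb \ G) = (Bb ∩ X i) \ G := by
      ext x; simp only [mem_diff, mem_inter_iff]; tauto
    rw [hSeq]
    have hsub1 : (Bb ∩ X i) \ G ⊆ Bb \ G := fun x hx => ⟨hx.1.1, hx.2⟩
    have hsub2 : (Bb ∩ X i) \ G ⊆ X i \ G := fun x hx => ⟨hx.1.2, hx.2⟩
    refine (hQ.indep.subset hsub1).isBasis_of_subset_of_subset_closure hsub2 ?_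
    have hSE : (Bb ∩ X i) \ G ⊆ M.E \ G := fun x hx => ⟨hB.subset_ground hx.1.1, hx.2⟩
    rw [guts_contract_closure_eq hGE htr hSE]
    intro x hx
    refine ⟨?_, hx.2⟩
    have h1 := hsp i hx.1
    rw [union_comm] at h1
    have he : M.closure (((Bb ∩ X i) \ G) ∪ (Bb ∩ G)) = M.closure (((Bb ∩ X i) \ G) ∪ G) := by
      rw [← closure_union_closure_right_eq, hFeq]
    rwa [he] at h1
  · intro i j hij x hx
    exact absurd (hpw hij ⟨hx.1.1, hx.2.1⟩) hx.1.2

lemma sInter_mem_aux {M : Matroid α} {X : ι → Set α} (hu : ⋃ i, X i = M.E)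
    {cs : Set (Set α)} (hne : cs.Nonempty)
    (hmem : ∀ F ∈ cs, M.IsFlat F ∧ (M.contract' F).IsSkewFamily (fun i => X i \ F))
    (hmod : M.IsModularSetFamily cs) :
    M.IsFlat (⋂₀ cs) ∧ (M.contract' (⋂₀ cs)).IsSkewFamily (fun i => X i \ (⋂₀ cs)) := by
  obtain ⟨B0, hB0i, hB0b⟩ := hmod
  obtain ⟨Bb, hBb, hB0B⟩ := hB0i.exists_isBase_superset
  have htr : ∀ F ∈ cs, M.IsBasis (Bb ∩ F) F := by
    intro F hF
    have h1 : Bb ∩ F = F ∩ B0 := by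
      refine subset_antisymm ?_ (fun x hx => ⟨hB0B hx.2, hx.1⟩)
      intro x hx
      have h2 : x ∈ Bb ∩ M.closure (F ∩ B0) := ⟨hx.1, (hB0b F hF).subset_closure hx.2⟩
      rwa [indep_trace hBb.indep ((inter_subset_right).trans hB0B)] at h2
    rw [h1]
    exact hB0b F hF
  have hGflat : M.IsFlat (⋂₀ cs) := by
    haveI := hne.coe_sort
    rw [sInter_eq_iInter]
    exact IsFlat.iInter (fun F => (hmem F F.2).1)
  have hIcap : Bb ∩ ⋂₀ cs = ⋂₀ ((fun F => Bb ∩ F) '' cs) := by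
    rw [sInter_image]
    ext x
    simp only [mem_inter_iff, mem_iInter, mem_sInter]
    exact ⟨fun h F hF => ⟨h.1, h.2 F hF⟩,
      fun h => ⟨(h _ hne.some_mem).1, fun F hF => (h F hF).2⟩⟩
  have hclG : ⋂₀ cs ⊆ M.closure (Bb ∩ ⋂₀ cs) := by
    have hcl := hBb.indep.closure_sInter_eq_biInter_closure_of_forall_subset
      (hne.image (fun F => Bb ∩ F)) (fun J hJ => by
        obtain ⟨F, -, rfl⟩ := hJ
        exact inter_subset_left)
    rw [← hIcap] at hcl
    rw [hcl]
    intro x hx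
    simp only [mem_iInter₂]
    rintro J ⟨F, hF, rfl⟩
    exact (htr F hF).subset_closure (hx F hF)
  have hGb : M.IsBasis (Bb ∩ ⋂₀ cs) (⋂₀ cs) :=
    (hBb.indep.subset inter_subset_left).isBasis_of_subset_of_subset_closure
      inter_subset_right hclG
  have hsp : ∀ j, X j ⊆ M.closure ((Bb ∩ ⋂₀ cs) ∪ ((Bb ∩ X j) \ (⋂₀ cs))) := by
    intro j
    have hTB : (Bb ∩ X j) \ (⋂₀ cs) ⊆ Bb := fun x hx => hx.1.1
    have hFsp : ∀ F ∈ cs, X j ⊆ M.closure ((Bb ∩ F) ∪ ((Bb ∩ X j) \ (⋂₀ cs))) := by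
      intro F hF
      obtain ⟨-, hsp'⟩ := extract_witness hu (hmem F hF).1 (hmem F hF).2 hBb (htr F hF)
      refine (hsp' j).trans (M.closure_subset_closure (union_subset_union_right _ ?_))
      exact fun x hx => ⟨hx.1, fun hxG => hx.2 (hxG F hF)⟩
    have hcl := hBb.indep.closure_sInter_eq_biInter_closure_of_forall_subset
      (hne.image (fun F => (Bb ∩ F) ∪ ((Bb ∩ X j) \ (⋂₀ cs)))) (fun J hJ => by
        obtain ⟨F, -, rfl⟩ := hJ
        exact union_subset inter_subset_left hTB)
    have hIcap2 : ⋂₀ ((fun F => (Bb ∩ F) ∪ ((Bb ∩ X j) \ (⋂₀ cs))) '' cs)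
        = (Bb ∩ ⋂₀ cs) ∪ ((Bb ∩ X j) \ (⋂₀ cs)) := by
      rw [sInter_image]
      ext x
      simp only [mem_iInter, mem_union, mem_inter_iff, mem_sInter, mem_diff]
      constructor
      · intro h
        by_cases hxT : x ∈ (Bb ∩ X j) \ (⋂₀ cs)
        · exact Or.inr ⟨⟨hxT.1.1, hxT.1.2⟩, hxT.2⟩
        · refine Or.inl ⟨?_, fun F hF => ?_⟩
          · rcases h _ hne.some_mem with h' | h'
            · exact h'.1
            · exact absurd ⟨⟨h'.1.1, h'.1.2⟩, h'.2⟩ hxT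
          · rcases h F hF with h' | h'
            · exact h'.2
            · exact absurd ⟨⟨h'.1.1, h'.1.2⟩, h'.2⟩ hxT
      · rintro (h | h) F hF
        · exact Or.inl ⟨h.1, h.2 F hF⟩
        · exact Or.inr ⟨⟨h.1.1, h.1.2⟩, h.2⟩
    rw [hIcap2] at hcl
    rw [hcl]
    intro x hx
    simp only [mem_iInter₂]
    rintro J ⟨F, hF, rfl⟩
    exact hFsp F hF hx
  have hpw : ∀ ⦃i j⦄, i ≠ j → X i ∩ X j ⊆ ⋂₀ cs := by
    intro i j hij x hx
    rw [mem_sInter]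
    intro F hF
    exact (extract_witness hu (hmem F hF).1 (hmem F hF).2 hBb (htr F hF)).1 hij hx
  exact ⟨hGflat, construct_witness hGflat hBb hGb hsp hpw⟩

/-- If the sets `X i` cover the ground set of `M`, then the collection
of flats `F` of `M` such that the family of sets `X i \ F` is skew in `M / F`
is a modular cut of `M`. -/
theorem isModularCut_guts (M : Matroid α) (X : ι → Set α) (hu : ⋃ i, X i = M.E) :
    M.IsModularCut
      {F | M.IsFlat F ∧ (M.contract' F).IsSkewFamily (fun i ↦ X i \ F)} := by
  refine ⟨fun F hF => hF.1, ?_, ?_, ?_⟩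
  · -- up-closed
    rintro F F' ⟨hFflat, hFskew⟩ hF' hss
    obtain ⟨J, hJ⟩ := M.exists_isBasis F hFflat.subset_ground
    obtain ⟨J', hJ', hJJ'⟩ := hJ.indep.subset_isBasis_of_subset (hJ.subset.trans hss)
      hF'.subset_ground
    obtain ⟨Bb, hBb, hJ'B⟩ := hJ'.indep.exists_isBase_superset
    have htrF' : M.IsBasis (Bb ∩ F') F' := by
      have h1 : Bb ∩ F' = J' := by
        refine subset_antisymm ?_ (subset_inter hJ'B hJ'.subset)
        intro x hx
        have h2 : x ∈ Bb ∩ M.closure J' := ⟨hx.1, hJ'.subset_closure hx.2⟩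
        rwa [indep_trace hBb.indep hJ'B] at h2
      rw [h1]; exact hJ'
    have htrF : M.IsBasis (Bb ∩ F) F := by
      have h1 : Bb ∩ F = J := by
        refine subset_antisymm ?_ (subset_inter (hJJ'.trans hJ'B) hJ.subset)
        intro x hx
        have h2 : x ∈ Bb ∩ M.closure J := ⟨hx.1, hJ.subset_closure hx.2⟩
        rwa [indep_trace hBb.indep (hJJ'.trans hJ'B)] at h2
      rw [h1]; exact hJ
    obtain ⟨hpair, hsp⟩ := extract_witness hu hFflat hFskew hBb htrF
    refine ⟨hF', construct_witness hF' hBb htrF' (fun j => ?_)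
      (fun i j hij => (hpair hij).trans hss)⟩
    refine (hsp j).trans (M.closure_subset_closure ?_)
    rintro x (hx | hx)
    · exact Or.inl ⟨hx.1, hss hx.2⟩
    · by_cases hxF' : x ∈ F'
      · exact Or.inl ⟨hx.1.1, hxF'⟩
      · exact Or.inr ⟨hx.1, hxF'⟩
  · -- modular pairs
    intro F F' hF hF' hmp
    have h := sInter_mem_aux hu (cs := {F, F'}) ⟨F, by simp⟩
      (by rintro G (rfl | rfl)
          · exact hF
          · exact hF') hmp
    rwa [sInter_pair] at h
  · -- chains
    intro cs hsub hinf _ hmodfam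
    exact sInter_mem_aux hu hinf.nonempty (fun F hF => hsub hF) hmodfam


end Guts

end Matroid
end

section
/- Let F be a flat of a matroid M. Then F is a modular flat of M if and only if for every pair of flats G₁, G₂ of M with G₁ ⊆ G₂, one has cl_M(G₁ ∪ F) ∩ G₂ = cl_M(G₁ ∪ (F ∩ G₂)). -/
open Set

namespace Matroid

variable {α : Type*} {ι : Type*}

/-- The closure of any set is a flat. -/
lemma aux_closure_flat (M : Matroid α) (X : Set α) : M.IsFlat (M.closure X) := by
  rw [closure_def, sInter_eq_iInter]
  have h : Nonempty {F : Set α // F ∈ {F | M.IsFlat F ∧ X ∩ M.E ⊆ F}} :=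
    ⟨⟨M.E, M.ground_isFlat, inter_subset_right⟩⟩
  exact IsFlat.iInter fun F ↦ F.2.1

/-- If `I ∪ J` is independent and `J₁` is an independent set with the same closure as `J`,
with `I` disjoint from that closure, then `I ∪ J₁` is independent. -/
lemma aux_union_indep_congr {M : Matroid α} {I J J₁ : Set α} (hIJ : M.Indep (I ∪ J))
    (hJ₁ : M.Indep J₁) (hcl : M.closure J₁ = M.closure J)
    (hdj : ∀ e ∈ I, e ∉ M.closure J) : M.Indep (I ∪ J₁) := by
  have hIE : I ∪ J₁ ⊆ M.E :=
    union_subset (subset_union_left.trans hIJ.subset_ground) hJ₁.subset_ground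
  obtain ⟨W, hW, hJ₁W⟩ := hJ₁.subset_isBasis_of_subset (subset_union_right (s := I)) hIE
  have hIW : I ⊆ W := by
    intro e he
    by_contra heW
    have heM : e ∈ M.closure W := hW.subset_closure (Or.inl he)
    have hWeq : W = (W ∩ I) ∪ J₁ := by
      refine subset_antisymm (fun x hx ↦ ?_) (union_subset inter_subset_left hJ₁W)
      rcases hW.subset hx with h | h
      · exact Or.inl ⟨hx, h⟩
      · exact Or.inr h
    have h1 : M.closure ((W ∩ I) ∪ J₁) = M.closure ((W ∩ I) ∪ J) := by
      rw [← closure_union_closure_right_eq, hcl, closure_union_closure_right_eq]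
    have hbase : M.Indep ((W ∩ I) ∪ J) :=
      hIJ.subset (union_subset (inter_subset_right.trans subset_union_left) subset_union_right)
    have hne : e ∉ (W ∩ I) ∪ J := by
      rintro (⟨h1', -⟩ | h2)
      · exact heW h1'
      · exact hdj e he (M.subset_closure J (subset_union_right.trans hIJ.subset_ground) h2)
    have hsub : insert e ((W ∩ I) ∪ J) ⊆ I ∪ J :=
      insert_subset (Or.inl he)
        (union_subset (inter_subset_right.trans subset_union_left) subset_union_right)
    have hnotcl := ((hbase.insert_indep_iff_of_notMem hne).mp (hIJ.subset hsub)).2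
    rw [hWeq, h1] at heM
    exact hnotcl heM
  have hWeq : W = I ∪ J₁ := hW.subset.antisymm (union_subset hIW hJ₁W)
  rw [← hWeq]
  exact hW.indep

/-- If `I ∪ J` is independent and `X ⊆ cl J`, then `cl (X ∪ I) ∩ cl J ⊆ cl (X ∪ (I ∩ J))`. -/
lemma aux_closure_union_inter {M : Matroid α} {I J X : Set α}
    (hIJ : M.Indep (I ∪ J)) (hX : X ⊆ M.closure J) :
    M.closure (X ∪ I) ∩ M.closure J ⊆ M.closure (X ∪ (I ∩ J)) := by
  have hJE : J ⊆ M.E := subset_union_right.trans hIJ.subset_ground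
  have hX'cl : X ∪ (I ∩ J) ⊆ M.closure J :=
    union_subset hX (inter_subset_right.trans (M.subset_closure J hJE))
  have hdj : ∀ e ∈ I \ J, e ∉ M.closure J := by
    intro e he hecl
    have hJind : M.Indep J := hIJ.subset subset_union_right
    have hins : M.Indep (insert e J) :=
      hIJ.subset (insert_subset (Or.inl he.1) subset_union_right)
    exact ((hJind.insert_indep_iff_of_notMem he.2).mp hins).2 hecl
  have hXI : (X ∪ (I ∩ J)) ∪ (I \ J) = X ∪ I := by
    rw [union_assoc, inter_union_diff]
  obtain ⟨J₀, hJ₀⟩ := M.exists_isBasis (X ∪ (I ∩ J)) (hX'cl.trans (M.closure_subset_ground J))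
  obtain ⟨J₁, hJ₁, hJ₀J₁⟩ := hJ₀.indep.subset_isBasis_of_subset (hJ₀.subset.trans hX'cl)
    (M.closure_subset_ground J)
  have hclJ₁ : M.closure J₁ = M.closure J := by
    rw [hJ₁.closure_eq_closure, closure_closure]
  have hind : M.Indep ((I \ J) ∪ J₁) :=
    aux_union_indep_congr
      (hIJ.subset (union_subset (diff_subset.trans subset_union_left) subset_union_right))
      hJ₁.indep hclJ₁ hdj
  have h1 : M.closure (X ∪ I) = M.closure (J₀ ∪ (I \ J)) := by
    rw [← hXI, ← closure_union_closure_left_eq, ← hJ₀.closure_eq_closure,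
      closure_union_closure_left_eq]
  have h2 : M.Indep ((J₀ ∪ (I \ J)) ∪ J₁) := by
    have hrw : (J₀ ∪ (I \ J)) ∪ J₁ = (I \ J) ∪ J₁ := by
      rw [union_comm J₀ (I \ J), union_assoc, union_eq_self_of_subset_left hJ₀J₁]
    rw [hrw]
    exact hind
  have h3 := h2.closure_inter_eq_inter_closure
  have h4 : (J₀ ∪ (I \ J)) ∩ J₁ = J₀ := by
    refine subset_antisymm ?_ (subset_inter subset_union_left hJ₀J₁)
    rintro x ⟨hx1 | hx2, hxJ₁⟩
    · exact hx1
    · exact absurd (hclJ₁ ▸ M.subset_closure J₁ hJ₁.indep.subset_ground hxJ₁)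
        (hdj x hx2)
  intro x hx
  have hx' : x ∈ M.closure (J₀ ∪ (I \ J)) ∩ M.closure J₁ := by
    rw [hclJ₁]
    exact ⟨h1 ▸ hx.1, hx.2⟩
  rw [← h3, h4] at hx'
  exact hJ₀.closure_eq_closure ▸ hx'

/-- A flat `F` of `M` is modular iff for all flats `G₁ ⊆ G₂` of `M`,
`cl (G₁ ∪ F) ∩ G₂ = cl (G₁ ∪ (F ∩ G₂))`. -/
theorem isModularFlat_iff_forall_closure_inter (M : Matroid α) {F : Set α}
    (hF : M.IsFlat F) :
    M.IsModularFlat F ↔ ∀ G₁ G₂, M.IsFlat G₁ → M.IsFlat G₂ → G₁ ⊆ G₂ →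
      M.closure (G₁ ∪ F) ∩ G₂ = M.closure (G₁ ∪ (F ∩ G₂)) := by
  constructor
  · rintro ⟨-, hmod⟩ G₁ G₂ h1 h2 hss
    obtain ⟨B, hB, hbas⟩ := hmod G₂ h2
    have hBF : M.IsBasis (F ∩ B) F := hbas F (mem_insert _ _)
    have hBG : M.IsBasis (G₂ ∩ B) G₂ := hbas G₂ (mem_insert_of_mem _ rfl)
    have hFcl : M.closure (F ∩ B) = F := by rw [hBF.closure_eq_closure, hF.closure]
    have hGcl : M.closure (G₂ ∩ B) = G₂ := by rw [hBG.closure_eq_closure, h2.closure]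
    refine subset_antisymm ?_ ?_
    · have key := aux_closure_union_inter (M := M) (I := F ∩ B) (J := G₂ ∩ B) (X := G₁)
        (hB.subset (union_subset inter_subset_right inter_subset_right))
        (by rw [hGcl]; exact hss)
      rw [hGcl] at key
      have hL : M.closure (G₁ ∪ F) = M.closure (G₁ ∪ (F ∩ B)) := by
        conv_rhs => rw [← closure_union_closure_right_eq, hFcl]
      have hR : M.closure (G₁ ∪ ((F ∩ B) ∩ (G₂ ∩ B))) ⊆ M.closure (G₁ ∪ (F ∩ G₂)) :=
        M.closure_subset_closure (union_subset_union_right _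
          (inter_subset_inter inter_subset_left inter_subset_left))
      exact fun x hx ↦ hR (key ⟨hL ▸ hx.1, hx.2⟩)
    · refine subset_inter
        (M.closure_subset_closure (union_subset_union_right _ inter_subset_left)) ?_
      have : M.closure (G₁ ∪ (F ∩ G₂)) ⊆ M.closure G₂ :=
        M.closure_subset_closure (union_subset hss inter_subset_right)
      rw [h2.closure] at this
      exact this
  · intro h
    refine ⟨hF, fun G hG ↦ ?_⟩
    obtain ⟨K, hK⟩ := M.exists_isBasis (F ∩ G) (inter_subset_left.trans hF.subset_ground)
    obtain ⟨BF, hBF, hKBF⟩ := hK.indep.subset_isBasis_of_subset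
      (hK.subset.trans inter_subset_left) hF.subset_ground
    obtain ⟨W, hW, hBFW⟩ := hBF.indep.subset_isBasis_of_subset
      (hBF.subset.trans subset_union_left)
      (union_subset hF.subset_ground hG.subset_ground)
    have hWF : W ∩ F = BF := by
      refine subset_antisymm (fun e he ↦ ?_) (subset_inter hBFW hBF.subset)
      exact hBF.mem_of_insert_indep he.2 (hW.indep.subset (insert_subset he.1 hBFW))
    have hKW : K ⊆ W ∩ G := subset_inter (hKBF.trans hBFW) (hK.subset.trans inter_subset_right)
    have hGspan : G ⊆ M.closure (W ∩ G) := by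
      intro g hg
      by_contra hgcl
      have hgW : g ∉ W := fun hgW ↦ hgcl
        (M.subset_closure (W ∩ G) (inter_subset_left.trans hW.indep.subset_ground) ⟨hgW, hg⟩)
      have hgclW : g ∈ M.closure W := hW.subset_closure (Or.inr hg)
      have hsubG : M.closure (W ∩ G) ⊆ G := by
        have := M.closure_subset_closure (inter_subset_right (s := W) (t := G))
        rwa [hG.closure] at this
      have heq := h (M.closure (W ∩ G)) G (M.aux_closure_flat _) hG hsubG
      have hgmem : g ∈ M.closure (M.closure (W ∩ G) ∪ F) ∩ G := by
        refine ⟨?_, hg⟩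
        have h5 : M.closure W ⊆ M.closure (M.closure (W ∩ G) ∪ F) := by
          refine M.closure_subset_closure (fun x hx ↦ ?_)
          rcases hW.subset hx with hxF | hxG
          · exact Or.inr hxF
          · exact Or.inl (M.subset_closure _
              (inter_subset_left.trans hW.indep.subset_ground) ⟨hx, hxG⟩)
        exact h5 hgclW
      rw [heq] at hgmem
      have hFG : F ∩ G ⊆ M.closure (W ∩ G) :=
        hK.subset_closure.trans (M.closure_subset_closure hKW)
      have : M.closure (M.closure (W ∩ G) ∪ (F ∩ G)) ⊆ M.closure (W ∩ G) := by
        have h6 : M.closure (W ∩ G) ∪ (F ∩ G) ⊆ M.closure (W ∩ G) :=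
          union_subset Subset.rfl hFG
        have := M.closure_subset_closure h6
        rwa [closure_closure] at this
      exact hgcl (this hgmem)
    refine ⟨W, hW.indep, ?_⟩
    intro X hX
    rcases hX with rfl | hX
    · rw [inter_comm, hWF]
      exact hBF
    · rw [mem_singleton_iff] at hX
      subst hX
      rw [inter_comm]
      exact (hW.indep.subset inter_subset_left).isBasis_of_subset_of_subset_closure
        inter_subset_right hGspan
end Matroid
end
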